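/- arXiv:1707.04360 — 2 statements merged into one kernel-verified Lean document; each statement's English description precedes it below -/
import Mathlib

section
/- Let (ξ_k)_{k=1}^∞ be uncorrelated real random variables with E(ξ_k) = 0 and E(ξ_k²) = λ_k, and let (φ_k) be functions in L²(𝒯) with derivatives φ_k^{(1)} ∈ L²(𝒯). Suppose ψ_1, …, ψ_K are the top-K orthonormal eigenfunctions of the covariance operator of X^{(1)} := Σ_k ξ_k φ_k^{(1)} (assumed convergent in L²), with eigenvalues λ_{1,1} ≥ … ≥ λ_{K,1}. Then Σ_{k=1}^K λ_{k,1} ≥ Σ_{k=1}^K λ_k ∫ (φ_k^{(1)}(t))² dt whenever the φ_k^{(1)}/‖φ_k^{(1)}‖ are orthonormal. -/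
open MeasureTheory
open scoped RealInnerProductSpace

lemma dpca_key (lam1 : ℕ → ℝ) (hanti : Antitone lam1) (hpos1 : ∀ k, 0 ≤ lam1 k)
    (K : ℕ) (d : ℕ → ℝ) (hd0 : ∀ j, 0 ≤ d j) (hd1 : ∀ j, d j ≤ 1)
    (hds : Summable d) (hdK : ∑' j, d j ≤ K) :
    ∑' j, lam1 j * d j ≤ ∑ j ∈ Finset.range K, lam1 j := by
  have hsum1 : Summable (fun j => lam1 j * d j) := by
    refine Summable.of_nonneg_of_le (fun j => mul_nonneg (hpos1 j) (hd0 j))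
      (fun j => mul_le_mul_of_nonneg_right (hanti (Nat.zero_le j)) (hd0 j))
      (hds.mul_left (lam1 0))
  have hsum2 : Summable (fun j => (lam1 j - lam1 K) * d j) := by
    have := hsum1.sub (hds.mul_left (lam1 K))
    simpa [sub_mul] using this
  set h : ℕ → ℝ := fun j => if j < K then lam1 j - lam1 K else 0 with hh
  have hsumh : Summable h := by
    apply summable_of_ne_finset_zero (s := Finset.range K)
    intro j hj
    simp only [Finset.mem_range] at hj
    simp [hh, hj]
  have hle : ∀ j, (lam1 j - lam1 K) * d j ≤ h j := by
    intro j
    by_cases hj : j < K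
    · simp only [hh, if_pos hj]
      have h1 : 0 ≤ lam1 j - lam1 K := sub_nonneg.2 (hanti hj.le)
      calc (lam1 j - lam1 K) * d j ≤ (lam1 j - lam1 K) * 1 :=
            mul_le_mul_of_nonneg_left (hd1 j) h1
        _ = lam1 j - lam1 K := mul_one _
    · simp only [hh, if_neg hj]
      have h1 : lam1 j - lam1 K ≤ 0 := sub_nonpos.2 (hanti (Nat.le_of_not_lt hj))
      exact mul_nonpos_of_nonpos_of_nonneg h1 (hd0 j)
  have htsumh : ∑' j, h j = ∑ j ∈ Finset.range K, (lam1 j - lam1 K) := by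
    rw [tsum_eq_sum (s := Finset.range K)]
    · apply Finset.sum_congr rfl
      intro j hj
      simp only [Finset.mem_range] at hj
      simp [hh, hj]
    · intro j hj
      simp only [Finset.mem_range] at hj
      simp [hh, hj]
  have hstep : ∑' j, lam1 j * d j
      = (∑' j, (lam1 j - lam1 K) * d j) + lam1 K * ∑' j, d j := by
    rw [← tsum_mul_left, ← Summable.tsum_add hsum2 (hds.mul_left (lam1 K))]
    congr 1; funext j; ring
  rw [hstep]
  have h1 : ∑' j, (lam1 j - lam1 K) * d j ≤ ∑ j ∈ Finset.range K, (lam1 j - lam1 K) := by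
    rw [← htsumh]; exact Summable.tsum_le_tsum hle hsum2 hsumh
  have h2 : lam1 K * ∑' j, d j ≤ lam1 K * K :=
    mul_le_mul_of_nonneg_left hdK (hpos1 K)
  calc (∑' j, (lam1 j - lam1 K) * d j) + lam1 K * ∑' j, d j
      ≤ (∑ j ∈ Finset.range K, (lam1 j - lam1 K)) + lam1 K * K := add_le_add h1 h2
    _ = ∑ j ∈ Finset.range K, lam1 j := by
        rw [Finset.sum_sub_distrib]
        simp [Finset.sum_const, mul_comm]


/-- Inequality (2.8) of the paper: the top-K eigenvalues `λ_{k,1}` of the covariance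
operator `A` of the derivative process `X⁽¹⁾ = Σ_k ξ_k φ_k⁽¹⁾` dominate the variances
`λ_k ‖φ_k⁽¹⁾‖²` captured by the (normalized, assumed orthonormal) eigenfunction
derivatives `g k = φ_k⁽¹⁾`. -/
theorem dpca_variance_dominates {H : Type*} [NormedAddCommGroup H] [InnerProductSpace ℝ H]
    [CompleteSpace H] {Ω : Type*} [MeasurableSpace Ω]
    (P : Measure Ω) [IsProbabilityMeasure P]
    (ξ : ℕ → Ω → ℝ) (lam : ℕ → ℝ)
    (hmean : ∀ k, ∫ ω, ξ k ω ∂P = 0)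
    (hcov : ∀ j k, ∫ ω, ξ j ω * ξ k ω ∂P = if j = k then lam j else 0)
    (g : ℕ → H)  -- g k is the derivative φ_k⁽¹⁾, as an element of L²(𝒯)
    (X1 : Ω → H)
    (hX1 : ∀ᵐ ω ∂P, HasSum (fun k => ξ k ω • g k) (X1 ω))
    (A : H →L[ℝ] H)
    (hAcov : ∀ u v : H, ⟪A u, v⟫ = ∫ ω, ⟪X1 ω, u⟫ * ⟪X1 ω, v⟫ ∂P)
    (hAser : ∀ u v : H, ⟪A u, v⟫ = ∑' j, lam j * ⟪g j, u⟫ * ⟪g j, v⟫)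
    (lam1 : ℕ → ℝ) (hanti : Antitone lam1) (hpos1 : ∀ k, 0 ≤ lam1 k)
    (e : ℕ → H) (he : Orthonormal ℝ e)
    (hspec : ∀ x : H, HasSum (fun k => (lam1 k * ⟪e k, x⟫) • e k) (A x))
    (hON : Orthonormal ℝ (fun k => ‖g k‖⁻¹ • g k))
    (K : ℕ) :
    ∑ k ∈ Finset.range K, lam k * ‖g k‖ ^ 2 ≤ ∑ k ∈ Finset.range K, lam1 k := by
  classical
  set G : ℕ → H := fun k => ‖g k‖⁻¹ • g k with hG
  have hgne : ∀ k, ‖g k‖ ≠ 0 := by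
    intro k hk
    have h1 := hON.1 k
    simp only [hG] at h1
    rw [norm_smul, hk] at h1
    simp at h1
  -- Claim A : ⟪A (G k), G k⟫ = lam k * ‖g k‖ ^ 2
  have hA1 : ∀ k, ⟪A (G k), G k⟫ = lam k * ‖g k‖ ^ 2 := by
    intro k
    rw [hAser]
    rw [tsum_eq_single k]
    · have hinner : ⟪g k, G k⟫ = ‖g k‖ := by
        simp only [hG, real_inner_smul_right, real_inner_self_eq_norm_sq]
        field_simp [hgne k]
      rw [hinner]; ring
    · intro j hjk
      have h0 : ⟪G j, G k⟫ = 0 := hON.2 hjk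
      have h1 : ⟪g j, G k⟫ = 0 := by
        have := h0
        simp only [hG, real_inner_smul_left] at this
        rcases mul_eq_zero.1 this with h | h
        · exact absurd (inv_eq_zero.1 h) (hgne j)
        · exact h
      simp [h1]
  -- Claim B : spectral expansion of the quadratic form
  have hB : ∀ k, HasSum (fun j => lam1 j * ⟪e j, G k⟫ ^ 2) ⟪A (G k), G k⟫ := by
    intro k
    have h2 := (hspec (G k)).mapL (innerSL ℝ (G k))
    have e1 : (fun j => (innerSL ℝ (G k)) ((lam1 j * ⟪e j, G k⟫) • e j))
        = fun j => lam1 j * ⟪e j, G k⟫ ^ 2 := by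
      funext j
      simp only [innerSL_apply_apply, real_inner_smul_right]
      rw [real_inner_comm]
      ring
    have e2 : (innerSL ℝ (G k)) (A (G k)) = ⟪A (G k), G k⟫ := by
      simp only [innerSL_apply_apply]
      exact real_inner_comm _ _
    rw [e1, e2] at h2
    exact h2
  set c : ℕ → ℕ → ℝ := fun j k => ⟪e j, G k⟫ ^ 2 with hc
  set d : ℕ → ℝ := fun j => ∑ k ∈ Finset.range K, c j k with hd
  have hcsum : ∀ k, Summable (fun j => c j k) := by
    intro k
    have := he.inner_products_summable (G k)
    simpa [hc, Real.norm_eq_abs, sq_abs] using this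
  have hBig : HasSum (fun j => ∑ k ∈ Finset.range K, lam1 j * c j k)
      (∑ k ∈ Finset.range K, ⟪A (G k), G k⟫) := hasSum_sum fun k _ => hB k
  have hLHS : ∑ k ∈ Finset.range K, lam k * ‖g k‖ ^ 2 = ∑' j, lam1 j * d j := by
    calc ∑ k ∈ Finset.range K, lam k * ‖g k‖ ^ 2
        = ∑ k ∈ Finset.range K, ⟪A (G k), G k⟫ :=
          Finset.sum_congr rfl (fun k _ => (hA1 k).symm)
      _ = ∑' j, ∑ k ∈ Finset.range K, lam1 j * c j k := hBig.tsum_eq.symm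
      _ = ∑' j, lam1 j * d j := by
          exact tsum_congr fun j => (Finset.mul_sum _ _ _).symm
  have hd0 : ∀ j, 0 ≤ d j :=
    fun j => Finset.sum_nonneg fun k _ => sq_nonneg _
  have hd1 : ∀ j, d j ≤ 1 := by
    intro j
    have := hON.sum_inner_products_le (s := Finset.range K) (e j)
    have hnorm : ‖e j‖ ^ 2 = 1 := by rw [he.1 j]; norm_num
    calc d j = ∑ k ∈ Finset.range K, ‖⟪G k, e j⟫‖ ^ 2 := by
          refine Finset.sum_congr rfl fun k _ => ?_
          simp [hc, Real.norm_eq_abs, sq_abs, real_inner_comm]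
      _ ≤ ‖e j‖ ^ 2 := this
      _ = 1 := hnorm
  have hds : Summable d := summable_sum fun k _ => hcsum k
  have hdK : ∑' j, d j ≤ K := by
    rw [hd, Summable.tsum_finsetSum fun k _ => hcsum k]
    calc ∑ k ∈ Finset.range K, ∑' j, c j k
        ≤ ∑ k ∈ Finset.range K, (1 : ℝ) := by
          refine Finset.sum_le_sum fun k _ => ?_
          have h1 := he.tsum_inner_products_le (G k)
          have h2 : ∑' j, c j k = ∑' j, ‖⟪e j, G k⟫‖ ^ 2 :=
            tsum_congr fun j => by simp [hc, Real.norm_eq_abs, sq_abs]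
          have h3 : ‖G k‖ ^ 2 = 1 := by rw [hON.1 k]; norm_num
          rw [h2]
          calc ∑' j, ‖⟪e j, G k⟫‖ ^ 2 ≤ ‖G k‖ ^ 2 := h1
            _ = 1 := h3
      _ = K := by simp
  rw [hLHS]
  exact dpca_key lam1 hanti hpos1 K d hd0 hd1 hds hdK
end

section
/- Let X be a mean-square continuously differentiable process on compact 𝒯 with mean μ and covariance G, such that the mixed partial derivative G^{(1,0)}(s,t) = ∂G(s,t)/∂s exists and is continuous. Let φ ∈ L²(𝒯) and define ξ = ∫_𝒯 (X^{(1)}(s) − μ'(s)) φ(s) ds. Then for any t ∈ 𝒯, Cov(ξ, X(t)) = ∫_𝒯 G^{(1,0)}(s, t) φ(s) ds. -/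
open MeasureTheory

lemma aux_integrable_mul {α : Type*} [MeasurableSpace α] {μ : Measure α} {f g : α → ℝ}
    (hf : MemLp f 2 μ) (hg : MemLp g 2 μ) : Integrable (fun a => f a * g a) μ := by
  have h : MemLp (f • g) 1 μ := hg.smul hf (hpqr := ⟨by
    simp only [one_div, inv_one]
    rw [ENNReal.inv_two_add_inv_two]⟩)
  have h2 := memLp_one_iff_integrable.mp h
  exact h2

lemma aux_integrable_sq {α : Type*} [MeasurableSpace α] {μ : Measure α} {f : α → ℝ}
    (hf : MemLp f 2 μ) : Integrable (fun a => f a ^ 2) μ :=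
  (aux_integrable_mul hf hf).congr (Filter.Eventually.of_forall fun a => (pow_two (f a)).symm)

lemma aux_cs_abs {α : Type*} [MeasurableSpace α] {μ : Measure α} {f g : α → ℝ}
    (hf : MemLp f 2 μ) (hg : MemLp g 2 μ) :
    ∫ a, |f a * g a| ∂μ ≤ Real.sqrt (∫ a, f a ^ 2 ∂μ) * Real.sqrt (∫ a, g a ^ 2 ∂μ) := by
  have h22 : (2:ℝ).HolderConjugate 2 := Real.HolderConjugate.two_two
  have h2 : ENNReal.ofReal (2:ℝ) = 2 := by norm_num
  have H := integral_mul_norm_le_Lp_mul_Lq h22 (h2 ▸ hf) (h2 ▸ hg)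
  simp only [Real.norm_eq_abs, Real.rpow_two] at H
  calc ∫ a, |f a * g a| ∂μ = ∫ a, |f a| * |g a| ∂μ := by simp [abs_mul]
    _ ≤ (∫ a, |f a| ^ 2 ∂μ) ^ (1/(2:ℝ)) * (∫ a, |g a| ^ 2 ∂μ) ^ (1/(2:ℝ)) := H
    _ = Real.sqrt (∫ a, f a ^ 2 ∂μ) * Real.sqrt (∫ a, g a ^ 2 ∂μ) := by
        rw [← Real.sqrt_eq_rpow, ← Real.sqrt_eq_rpow]
        simp [sq_abs]

lemma aux_cs {α : Type*} [MeasurableSpace α] {μ : Measure α} {f g : α → ℝ}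
    (hf : MemLp f 2 μ) (hg : MemLp g 2 μ) :
    |∫ a, f a * g a ∂μ| ≤ Real.sqrt (∫ a, f a ^ 2 ∂μ) * Real.sqrt (∫ a, g a ^ 2 ∂μ) := by
  calc |∫ a, f a * g a ∂μ| ≤ ∫ a, |f a * g a| ∂μ := by
        have := norm_integral_le_integral_norm (μ := μ) (fun a => f a * g a)
        simpa only [Real.norm_eq_abs] using this
    _ ≤ _ := aux_cs_abs hf hg

lemma aux_sqrt_tri {α : Type*} [MeasurableSpace α] {μ : Measure α} {f g : α → ℝ}
    (hf : MemLp f 2 μ) (hg : MemLp g 2 μ) :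
    Real.sqrt (∫ a, (f a + g a) ^ 2 ∂μ) ≤
      Real.sqrt (∫ a, f a ^ 2 ∂μ) + Real.sqrt (∫ a, g a ^ 2 ∂μ) := by
  set A := Real.sqrt (∫ a, f a ^ 2 ∂μ) with hA
  set B := Real.sqrt (∫ a, g a ^ 2 ∂μ) with hB
  have hA0 : 0 ≤ A := Real.sqrt_nonneg _
  have hB0 : 0 ≤ B := Real.sqrt_nonneg _
  have hfg := aux_cs hf hg
  have hint : ∫ a, (f a + g a) ^ 2 ∂μ ≤ (A + B) ^ 2 := by
    have h1 : Integrable (fun a => f a ^ 2) μ := aux_integrable_sq hf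
    have h2 : Integrable (fun a => f a * g a) μ := aux_integrable_mul hf hg
    have h3 : Integrable (fun a => g a ^ 2) μ := aux_integrable_sq hg
    have e : ∫ a, (f a + g a) ^ 2 ∂μ
        = ∫ a, f a ^ 2 ∂μ + (2 * ∫ a, f a * g a ∂μ + ∫ a, g a ^ 2 ∂μ) := by
      have h23 : Integrable (fun a => 2 * (f a * g a) + g a ^ 2) μ :=
        (h2.const_mul 2).add h3
      rw [← integral_const_mul, ← integral_add (h2.const_mul 2) h3,
        ← integral_add h1 h23]
      exact integral_congr_ae (Filter.Eventually.of_forall fun a => by ring)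
    have hsqf : ∫ a, f a ^ 2 ∂μ = A ^ 2 :=
      (Real.sq_sqrt (integral_nonneg fun a => sq_nonneg _)).symm
    have hsqg : ∫ a, g a ^ 2 ∂μ = B ^ 2 :=
      (Real.sq_sqrt (integral_nonneg fun a => sq_nonneg _)).symm
    have h4 : ∫ a, f a * g a ∂μ ≤ A * B := le_trans (le_abs_self _) hfg
    rw [e, hsqf, hsqg] at *
    nlinarith
  calc Real.sqrt (∫ a, (f a + g a) ^ 2 ∂μ) ≤ Real.sqrt ((A + B) ^ 2) :=
        Real.sqrt_le_sqrt hint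
    _ = A + B := Real.sqrt_sq (by positivity)

lemma aux_hasDeriv {Ω : Type*} [MeasurableSpace Ω] {P : Measure Ω} [IsProbabilityMeasure P]
    {T : Set ℝ} {X : ℝ → Ω → ℝ} {X1s Y : Ω → ℝ} {s : ℝ}
    (hL2 : ∀ u ∈ T, MemLp (X u) 2 P) (hX1 : MemLp X1s 2 P) (hY : MemLp Y 2 P)
    (hs : s ∈ T)
    (hms : ∀ ε > 0, ∃ δ > 0, ∀ u ∈ T, u ≠ s → |u - s| < δ →
      ∫ ω, ((X u ω - X s ω) / (u - s) - X1s ω) ^ 2 ∂P ≤ ε) :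
    HasDerivWithinAt (fun u => ∫ ω, X u ω * Y ω ∂P) (∫ ω, X1s ω * Y ω ∂P) T s := by
  set K := Real.sqrt (∫ ω, Y ω ^ 2 ∂P) with hK
  have hK0 : 0 ≤ K := Real.sqrt_nonneg _
  rw [hasDerivWithinAt_iff_tendsto_slope, Metric.tendsto_nhdsWithin_nhds]
  intro ε hε
  obtain ⟨δ, hδ, hbd⟩ := hms ((ε / (2 * (K + 1))) ^ 2) (by positivity)
  refine ⟨δ, hδ, ?_⟩
  intro u hu hd
  have huT : u ∈ T := hu.1
  have hus : u ≠ s := by simpa using hu.2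
  have hune : u - s ≠ 0 := sub_ne_zero.mpr hus
  have hdist : |u - s| < δ := by simpa [Real.dist_eq] using hd
  have hQ : MemLp (fun ω => (X u ω - X s ω) / (u - s)) 2 P := by
    have h1 : MemLp (fun ω => (u - s)⁻¹ * (X u ω - X s ω)) 2 P :=
      ((hL2 u huT).sub (hL2 s hs)).const_mul _
    simpa only [div_eq_inv_mul] using h1
  have hDmem : MemLp (fun ω => (X u ω - X s ω) / (u - s) - X1s ω) 2 P := hQ.sub hX1
  have hslope : slope (fun u => ∫ ω, X u ω * Y ω ∂P) s u
      = ∫ ω, ((X u ω - X s ω) / (u - s)) * Y ω ∂P := by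
    rw [slope_def_field,
      ← integral_sub (aux_integrable_mul (hL2 u huT) hY) (aux_integrable_mul (hL2 s hs) hY),
      ← integral_div]
    exact integral_congr_ae (Filter.Eventually.of_forall fun ω => by ring)
  rw [Real.dist_eq, hslope,
    ← integral_sub (aux_integrable_mul hQ hY) (aux_integrable_mul hX1 hY)]
  have heq : (fun ω => ((X u ω - X s ω) / (u - s)) * Y ω - X1s ω * Y ω)
      = fun ω => ((X u ω - X s ω) / (u - s) - X1s ω) * Y ω := funext fun ω => by ring
  rw [heq]
  have hcs := aux_cs hDmem hY
  have hsq : Real.sqrt (∫ ω, ((X u ω - X s ω) / (u - s) - X1s ω) ^ 2 ∂P)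
      ≤ ε / (2 * (K + 1)) := by
    calc Real.sqrt (∫ ω, ((X u ω - X s ω) / (u - s) - X1s ω) ^ 2 ∂P)
        ≤ Real.sqrt ((ε / (2 * (K + 1))) ^ 2) := Real.sqrt_le_sqrt (hbd u huT hus hdist)
      _ = ε / (2 * (K + 1)) := Real.sqrt_sq (by positivity)
  calc |∫ ω, ((X u ω - X s ω) / (u - s) - X1s ω) * Y ω ∂P|
      ≤ Real.sqrt (∫ ω, ((X u ω - X s ω) / (u - s) - X1s ω) ^ 2 ∂P) * K := hcs
    _ ≤ ε / (2 * (K + 1)) * K := mul_le_mul_of_nonneg_right hsq hK0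
    _ < ε := by
        rw [div_mul_eq_mul_div, div_lt_iff₀ (by positivity)]
        nlinarith

/-- Covariance computation (2.12): for a mean-square continuously differentiable process
`X` with mean `μ`, covariance `G`, and continuous partial derivative `G⁽¹⁰⁾`, the score
`ξ = ∫ (X⁽¹⁾(s) − μ'(s)) φ(s) ds` satisfies
`Cov(ξ, X(t)) = ∫ G⁽¹⁰⁾(s,t) φ(s) ds`. -/
theorem dpc_score_covariance {Ω : Type*} [MeasurableSpace Ω]
    (P : Measure Ω) [IsProbabilityMeasure P]
    (a b : ℝ) (hab : a ≤ b)
    (X X1 : ℝ → Ω → ℝ)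
    (hL2 : ∀ t ∈ Set.Icc a b, MemLp (X t) 2 P)
    (hL2' : ∀ t ∈ Set.Icc a b, MemLp (X1 t) 2 P)
    (hjm : Measurable fun p : ℝ × Ω => X1 p.1 p.2)
    (hpath : ∀ ω, ∀ t ∈ Set.Icc a b,
      HasDerivWithinAt (fun s => X s ω) (X1 t ω) (Set.Icc a b) t)
    -- mean-square convergence of the difference quotients, uniform in t
    (hms : ∀ ε > 0, ∃ δ > 0, ∀ t ∈ Set.Icc a b, ∀ h : ℝ, h ≠ 0 → |h| < δ →
      t + h ∈ Set.Icc a b →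
      ∫ ω, ((X (t + h) ω - X t ω) / h - X1 t ω) ^ 2 ∂P ≤ ε)
    (μ μ' : ℝ → ℝ) (hμ : ∀ t, μ t = ∫ ω, X t ω ∂P)
    (hμ' : ∀ t ∈ Set.Icc a b, HasDerivWithinAt μ (μ' t) (Set.Icc a b) t)
    (G G10 : ℝ → ℝ → ℝ)
    (hG : ∀ s t, G s t = ∫ ω, (X s ω - μ s) * (X t ω - μ t) ∂P)
    (hG10 : ∀ t ∈ Set.Icc a b, ∀ s ∈ Set.Icc a b,
      HasDerivWithinAt (fun u => G u t) (G10 s t) (Set.Icc a b) s)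
    (hG10cont : ContinuousOn (fun p : ℝ × ℝ => G10 p.1 p.2)
      (Set.Icc a b ×ˢ Set.Icc a b))
    (φ : ℝ → ℝ) (hφ : MemLp φ 2 (volume.restrict (Set.Icc a b)))
    (ξ : Ω → ℝ)
    (hξ : ∀ ω, ξ ω = ∫ s in Set.Icc a b, (X1 s ω - μ' s) * φ s) :
    ∀ t ∈ Set.Icc a b,
      ∫ ω, ξ ω * (X t ω - μ t) ∂P = ∫ s in Set.Icc a b, G10 s t * φ s := by
  intro t ht
  rcases hab.eq_or_lt with heq | hab'
  · -- degenerate case a = b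
    subst heq
    have hz : volume.restrict (Set.Icc a a) = 0 := by
      rw [Measure.restrict_eq_zero]
      simp [Set.Icc_self]
    have hξ0 : ∀ ω, ξ ω = 0 := fun ω => by rw [hξ ω, hz, integral_zero_measure]
    simp only [hξ0, zero_mul, integral_zero, hz, integral_zero_measure]
  -- main case a < b
  classical
  haveI : IsFiniteMeasure (volume.restrict (Set.Icc a b)) :=
    ⟨by rw [Measure.restrict_apply_univ]; exact measure_Icc_lt_top⟩
  have hYm : MemLp (fun ω => X t ω - μ t) 2 P := (hL2 t ht).sub (memLp_const _)
  have hEY : ∫ ω, (X t ω - μ t) ∂P = 0 := by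
    have h1 : Integrable (X t) P := (hL2 t ht).integrable one_le_two
    rw [integral_sub h1 (integrable_const _), integral_const]
    simp [hμ t]
  -- restated mean-square hypothesis
  have hms' : ∀ ε > 0, ∃ δ > 0, ∀ s ∈ Set.Icc a b, ∀ u ∈ Set.Icc a b, u ≠ s → |u - s| < δ →
      ∫ ω, ((X u ω - X s ω) / (u - s) - X1 s ω) ^ 2 ∂P ≤ ε := by
    intro ε hε
    obtain ⟨δ, hδ, hh⟩ := hms ε hε
    refine ⟨δ, hδ, fun s hs u hu hne hd => ?_⟩
    have hsu : s + (u - s) = u := by ring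
    have := hh s hs (u - s) (sub_ne_zero.mpr hne) hd (by rw [hsu]; exact hu)
    rw [hsu] at this
    exact this
  have hms'' : ∀ s ∈ Set.Icc a b, ∀ ε > 0, ∃ δ > 0, ∀ u ∈ Set.Icc a b, u ≠ s → |u - s| < δ →
      ∫ ω, ((X u ω - X s ω) / (u - s) - X1 s ω) ^ 2 ∂P ≤ ε := by
    intro s hs ε hε
    obtain ⟨δ, hδ, hh⟩ := hms' ε hε
    exact ⟨δ, hδ, fun u hu => hh s hs u hu⟩
  -- G in terms of uncentered product
  have hGW : ∀ u ∈ Set.Icc a b, G u t = ∫ ω, X u ω * (X t ω - μ t) ∂P := by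
    intro u hu
    rw [hG u t]
    have h1 : Integrable (fun ω => X u ω * (X t ω - μ t)) P :=
      aux_integrable_mul (hL2 u hu) hYm
    have h2 : Integrable (fun ω => μ u * (X t ω - μ t)) P :=
      (hYm.integrable one_le_two).const_mul _
    calc ∫ ω, (X u ω - μ u) * (X t ω - μ t) ∂P
        = ∫ ω, (X u ω * (X t ω - μ t) - μ u * (X t ω - μ t)) ∂P :=
          integral_congr_ae (Filter.Eventually.of_forall fun ω => by ring)
      _ = ∫ ω, X u ω * (X t ω - μ t) ∂P - ∫ ω, μ u * (X t ω - μ t) ∂P :=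
          integral_sub h1 h2
      _ = ∫ ω, X u ω * (X t ω - μ t) ∂P := by
          rw [integral_const_mul, hEY, mul_zero, sub_zero]
  -- identification of G10 with the covariance of X1 with X t
  have hG10eq : ∀ s ∈ Set.Icc a b, G10 s t = ∫ ω, X1 s ω * (X t ω - μ t) ∂P := by
    intro s hs
    have hd1 : HasDerivWithinAt (fun u => G u t) (∫ ω, X1 s ω * (X t ω - μ t) ∂P)
        (Set.Icc a b) s := by
      have h := aux_hasDeriv (fun u hu => hL2 u hu) (hL2' s hs) hYm hs (hms'' s hs)
      exact h.congr (fun u hu => hGW u hu) (hGW s hs)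
    have hud := (uniqueDiffOn_Icc hab') s hs
    rw [← (hG10 t ht s hs).derivWithin hud, hd1.derivWithin hud]
  -- identification of μ' with the mean of X1
  have hμ'eq : ∀ s ∈ Set.Icc a b, μ' s = ∫ ω, X1 s ω ∂P := by
    intro s hs
    have hd1 : HasDerivWithinAt μ (∫ ω, X1 s ω ∂P) (Set.Icc a b) s := by
      have h := aux_hasDeriv (fun u hu => hL2 u hu) (hL2' s hs) (memLp_const (1:ℝ)) hs
        (hms'' s hs)
      simp only [mul_one] at h
      exact h.congr (fun u _ => hμ u) (hμ s)
    have hud := (uniqueDiffOn_Icc hab') s hs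
    rw [← (hμ' s hs).derivWithin hud, hd1.derivWithin hud]
  -- boundedness of the L² norms of X1
  obtain ⟨δ₁, hδ₁, hbd1⟩ := hms' 1 one_pos
  have hNXdiff : ∀ s ∈ Set.Icc a b, ∀ u ∈ Set.Icc a b,
      |Real.sqrt (∫ ω, X u ω ^ 2 ∂P) - Real.sqrt (∫ ω, X s ω ^ 2 ∂P)|
        ≤ Real.sqrt (∫ ω, (X u ω - X s ω) ^ 2 ∂P) := by
    intro s hs u hu
    have h1 : Real.sqrt (∫ ω, X u ω ^ 2 ∂P) ≤ Real.sqrt (∫ ω, (X u ω - X s ω) ^ 2 ∂P)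
        + Real.sqrt (∫ ω, X s ω ^ 2 ∂P) := by
      have h := aux_sqrt_tri ((hL2 u hu).sub (hL2 s hs)) (hL2 s hs)
      calc Real.sqrt (∫ ω, X u ω ^ 2 ∂P)
          = Real.sqrt (∫ ω, ((X u ω - X s ω) + X s ω) ^ 2 ∂P) := by
            congr 1
            exact integral_congr_ae (Filter.Eventually.of_forall fun ω => by ring)
        _ ≤ _ := h
    have h2 : Real.sqrt (∫ ω, X s ω ^ 2 ∂P) ≤ Real.sqrt (∫ ω, (X u ω - X s ω) ^ 2 ∂P)
        + Real.sqrt (∫ ω, X u ω ^ 2 ∂P) := by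
      have h := aux_sqrt_tri ((hL2 s hs).sub (hL2 u hu)) (hL2 u hu)
      calc Real.sqrt (∫ ω, X s ω ^ 2 ∂P)
          = Real.sqrt (∫ ω, ((X s ω - X u ω) + X u ω) ^ 2 ∂P) := by
            congr 1
            exact integral_congr_ae (Filter.Eventually.of_forall fun ω => by ring)
        _ ≤ Real.sqrt (∫ ω, (X s ω - X u ω) ^ 2 ∂P) + Real.sqrt (∫ ω, X u ω ^ 2 ∂P) := h
        _ = Real.sqrt (∫ ω, (X u ω - X s ω) ^ 2 ∂P) + Real.sqrt (∫ ω, X u ω ^ 2 ∂P) := by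
            congr 2
            exact integral_congr_ae (Filter.Eventually.of_forall fun ω => by ring)
    rw [abs_sub_le_iff]
    constructor <;> linarith
  have hQb : ∀ s ∈ Set.Icc a b, ∀ u ∈ Set.Icc a b, u ≠ s → |u - s| < δ₁ →
      Real.sqrt (∫ ω, (X u ω - X s ω) ^ 2 ∂P)
        ≤ |u - s| * (1 + Real.sqrt (∫ ω, X1 s ω ^ 2 ∂P)) := by
    intro s hs u hu hne hlt
    have hune : u - s ≠ 0 := sub_ne_zero.mpr hne
    have hD := hbd1 s hs u hu hne hlt
    have hQmem : MemLp (fun ω => (X u ω - X s ω) / (u - s)) 2 P := by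
      have h1 : MemLp (fun ω => (u - s)⁻¹ * (X u ω - X s ω)) 2 P :=
        ((hL2 u hu).sub (hL2 s hs)).const_mul _
      simpa only [div_eq_inv_mul] using h1
    have hDmem : MemLp (fun ω => (X u ω - X s ω) / (u - s) - X1 s ω) 2 P :=
      hQmem.sub (hL2' s hs)
    have htr := aux_sqrt_tri hDmem (hL2' s hs)
    have e1 : ∫ ω, (X u ω - X s ω) ^ 2 ∂P
        = ∫ ω, ((u - s) * ((X u ω - X s ω) / (u - s) - X1 s ω + X1 s ω)) ^ 2 ∂P := by
      refine integral_congr_ae (Filter.Eventually.of_forall fun ω => ?_)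
      show (X u ω - X s ω) ^ 2
          = ((u - s) * ((X u ω - X s ω) / (u - s) - X1 s ω + X1 s ω)) ^ 2
      rw [sub_add_cancel, mul_comm, div_mul_cancel₀ _ hune]
    have e2 : ∫ ω, ((u - s) * ((X u ω - X s ω) / (u - s) - X1 s ω + X1 s ω)) ^ 2 ∂P
        = (u - s) ^ 2 * ∫ ω, ((X u ω - X s ω) / (u - s) - X1 s ω + X1 s ω) ^ 2 ∂P := by
      rw [← integral_const_mul]
      exact integral_congr_ae (Filter.Eventually.of_forall fun ω => by ring)
    have hD1 : Real.sqrt (∫ ω, ((X u ω - X s ω) / (u - s) - X1 s ω) ^ 2 ∂P) ≤ 1 := by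
      rw [show (1:ℝ) = Real.sqrt 1 from (Real.sqrt_one).symm]
      exact Real.sqrt_le_sqrt hD
    calc Real.sqrt (∫ ω, (X u ω - X s ω) ^ 2 ∂P)
        = Real.sqrt ((u - s) ^ 2 *
            ∫ ω, ((X u ω - X s ω) / (u - s) - X1 s ω + X1 s ω) ^ 2 ∂P) := by
          rw [e1, e2]
      _ = |u - s| * Real.sqrt (∫ ω, ((X u ω - X s ω) / (u - s) - X1 s ω + X1 s ω) ^ 2 ∂P) := by
          rw [Real.sqrt_mul (sq_nonneg _), Real.sqrt_sq_eq_abs]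
      _ ≤ |u - s| * (1 + Real.sqrt (∫ ω, X1 s ω ^ 2 ∂P)) := by
          refine mul_le_mul_of_nonneg_left ?_ (abs_nonneg _)
          calc Real.sqrt (∫ ω, ((X u ω - X s ω) / (u - s) - X1 s ω + X1 s ω) ^ 2 ∂P)
              ≤ Real.sqrt (∫ ω, ((X u ω - X s ω) / (u - s) - X1 s ω) ^ 2 ∂P)
                + Real.sqrt (∫ ω, X1 s ω ^ 2 ∂P) := htr
            _ ≤ 1 + Real.sqrt (∫ ω, X1 s ω ^ 2 ∂P) := by
                exact add_le_add hD1 le_rfl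
  have hNXc : ContinuousOn (fun s => Real.sqrt (∫ ω, X s ω ^ 2 ∂P)) (Set.Icc a b) := by
    intro s hs
    rw [Metric.continuousWithinAt_iff]
    intro ε hε
    have hBs0 : (0:ℝ) < 1 + Real.sqrt (∫ ω, X1 s ω ^ 2 ∂P) := by positivity
    refine ⟨min δ₁ (ε / (1 + Real.sqrt (∫ ω, X1 s ω ^ 2 ∂P))), by positivity, ?_⟩
    intro u hu hd
    by_cases hus : u = s
    · subst hus; simpa using hε
    · have hd' : |u - s| < min δ₁ (ε / (1 + Real.sqrt (∫ ω, X1 s ω ^ 2 ∂P))) := by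
        simpa [Real.dist_eq] using hd
      have hlt : |u - s| < δ₁ := lt_of_lt_of_le hd' (min_le_left _ _)
      have hlt2 : |u - s| < ε / (1 + Real.sqrt (∫ ω, X1 s ω ^ 2 ∂P)) :=
        lt_of_lt_of_le hd' (min_le_right _ _)
      rw [Real.dist_eq]
      calc |Real.sqrt (∫ ω, X u ω ^ 2 ∂P) - Real.sqrt (∫ ω, X s ω ^ 2 ∂P)|
          ≤ Real.sqrt (∫ ω, (X u ω - X s ω) ^ 2 ∂P) := hNXdiff s hs u hu
        _ ≤ |u - s| * (1 + Real.sqrt (∫ ω, X1 s ω ^ 2 ∂P)) := hQb s hs u hu hus hlt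
        _ < (ε / (1 + Real.sqrt (∫ ω, X1 s ω ^ 2 ∂P)))
              * (1 + Real.sqrt (∫ ω, X1 s ω ^ 2 ∂P)) :=
            mul_lt_mul_of_pos_right hlt2 hBs0
        _ = ε := div_mul_cancel₀ _ (ne_of_gt hBs0)
  obtain ⟨M₀, hM₀⟩ := isCompact_Icc.exists_bound_of_continuousOn hNXc
  have hM₀0 : (0:ℝ) ≤ M₀ := by
    have := hM₀ a ⟨le_refl a, hab⟩
    exact le_trans (norm_nonneg _) this
  have hNxb : ∀ u ∈ Set.Icc a b, Real.sqrt (∫ ω, X u ω ^ 2 ∂P) ≤ M₀ := by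
    intro u hu
    have := hM₀ u hu
    rw [Real.norm_eq_abs] at this
    exact le_trans (le_abs_self _) this
  set c := min δ₁ (b - a) / 2 with hcdef
  have hminpos : 0 < min δ₁ (b - a) := lt_min hδ₁ (sub_pos.mpr hab')
  have hc0 : 0 < c := half_pos hminpos
  have hcδ : c < δ₁ := by
    have h1 : min δ₁ (b - a) ≤ δ₁ := min_le_left _ _
    rw [hcdef]
    linarith
  have hc2 : 2 * c ≤ b - a := by
    have : 2 * c = min δ₁ (b - a) := by rw [hcdef]; ring
    rw [this]
    exact min_le_right _ _
  set M := 2 * M₀ / c + 1 with hMdef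
  have hM0 : 0 ≤ M := by positivity
  have hMb : ∀ s ∈ Set.Icc a b, Real.sqrt (∫ ω, X1 s ω ^ 2 ∂P) ≤ M := by
    intro s hs
    have hsa := hs.1
    have hsb := hs.2
    set u := if s + c ≤ b then s + c else s - c with hudef
    have hufacts : u ∈ Set.Icc a b ∧ u ≠ s ∧ |u - s| = c := by
      rw [hudef]
      split_ifs with h
      · refine ⟨⟨by linarith, h⟩, by intro hh; nlinarith [hc0, congrArg (· - s) hh], ?_⟩
        rw [show s + c - s = c by ring, abs_of_pos hc0]
      · push_neg at h
        refine ⟨⟨by nlinarith, by linarith⟩, by intro hh; nlinarith [hc0, congrArg (· - s) hh], ?_⟩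
        rw [show s - c - s = -c by ring, abs_neg, abs_of_pos hc0]
    obtain ⟨huT, hune, habs⟩ := hufacts
    have hune' : u - s ≠ 0 := sub_ne_zero.mpr hune
    have hD := hbd1 s hs u huT hune (by rw [habs]; exact hcδ)
    have hQmem : MemLp (fun ω => (X u ω - X s ω) / (u - s)) 2 P := by
      have h1 : MemLp (fun ω => (u - s)⁻¹ * (X u ω - X s ω)) 2 P :=
        ((hL2 u huT).sub (hL2 s hs)).const_mul _
      simpa only [div_eq_inv_mul] using h1
    have hDmem : MemLp (fun ω => (X u ω - X s ω) / (u - s) - X1 s ω) 2 P :=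
      hQmem.sub (hL2' s hs)
    have key : Real.sqrt (∫ ω, X1 s ω ^ 2 ∂P)
        ≤ Real.sqrt (∫ ω, ((X u ω - X s ω) / (u - s)) ^ 2 ∂P)
          + Real.sqrt (∫ ω, ((X u ω - X s ω) / (u - s) - X1 s ω) ^ 2 ∂P) := by
      have htr := aux_sqrt_tri hQmem hDmem.neg
      calc Real.sqrt (∫ ω, X1 s ω ^ 2 ∂P)
          = Real.sqrt (∫ ω, ((X u ω - X s ω) / (u - s)
              + (-((X u ω - X s ω) / (u - s) - X1 s ω))) ^ 2 ∂P) := by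
            congr 1
            exact integral_congr_ae (Filter.Eventually.of_forall fun ω => by ring)
        _ ≤ Real.sqrt (∫ ω, ((X u ω - X s ω) / (u - s)) ^ 2 ∂P)
            + Real.sqrt (∫ ω, (-((X u ω - X s ω) / (u - s) - X1 s ω)) ^ 2 ∂P) := htr
        _ = Real.sqrt (∫ ω, ((X u ω - X s ω) / (u - s)) ^ 2 ∂P)
            + Real.sqrt (∫ ω, ((X u ω - X s ω) / (u - s) - X1 s ω) ^ 2 ∂P) := by
            congr 2
            exact integral_congr_ae (Filter.Eventually.of_forall fun ω => by ring)
    have hQle : Real.sqrt (∫ ω, ((X u ω - X s ω) / (u - s)) ^ 2 ∂P) ≤ 2 * M₀ / c := by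
      have e1 : ∫ ω, ((X u ω - X s ω) / (u - s)) ^ 2 ∂P
          = (∫ ω, (X u ω - X s ω) ^ 2 ∂P) * (((u - s) ^ 2)⁻¹) := by
        rw [← integral_mul_const]
        refine integral_congr_ae (Filter.Eventually.of_forall fun ω => ?_)
        show ((X u ω - X s ω) / (u - s)) ^ 2 = (X u ω - X s ω) ^ 2 * ((u - s) ^ 2)⁻¹
        rw [div_pow, div_eq_mul_inv]
      have h1 : Real.sqrt (∫ ω, (X u ω - X s ω) ^ 2 ∂P)
          ≤ Real.sqrt (∫ ω, X u ω ^ 2 ∂P) + Real.sqrt (∫ ω, X s ω ^ 2 ∂P) := by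
        have htr2 := aux_sqrt_tri (hL2 u huT) (hL2 s hs).neg
        calc Real.sqrt (∫ ω, (X u ω - X s ω) ^ 2 ∂P)
            = Real.sqrt (∫ ω, (X u ω + (- X s ω)) ^ 2 ∂P) := by congr 1
          _ ≤ Real.sqrt (∫ ω, X u ω ^ 2 ∂P) + Real.sqrt (∫ ω, (- X s ω) ^ 2 ∂P) := htr2
          _ = Real.sqrt (∫ ω, X u ω ^ 2 ∂P) + Real.sqrt (∫ ω, X s ω ^ 2 ∂P) := by
              congr 2
              exact integral_congr_ae (Filter.Eventually.of_forall fun ω => by ring)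
      calc Real.sqrt (∫ ω, ((X u ω - X s ω) / (u - s)) ^ 2 ∂P)
          = Real.sqrt (∫ ω, (X u ω - X s ω) ^ 2 ∂P) * Real.sqrt (((u - s) ^ 2)⁻¹) := by
            rw [e1, Real.sqrt_mul (integral_nonneg fun ω => sq_nonneg _)]
        _ = Real.sqrt (∫ ω, (X u ω - X s ω) ^ 2 ∂P) * c⁻¹ := by
            rw [Real.sqrt_inv, Real.sqrt_sq_eq_abs, habs]
        _ ≤ (M₀ + M₀) * c⁻¹ := by
            refine mul_le_mul_of_nonneg_right ?_ (by positivity)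
            exact le_trans h1 (add_le_add (hNxb u huT) (hNxb s hs))
        _ = 2 * M₀ / c := by ring
    have hD1 : Real.sqrt (∫ ω, ((X u ω - X s ω) / (u - s) - X1 s ω) ^ 2 ∂P) ≤ 1 := by
      rw [show (1:ℝ) = Real.sqrt 1 from (Real.sqrt_one).symm]
      exact Real.sqrt_le_sqrt hD
    rw [hMdef]
    linarith
  -- bound on μ'
  have hμ'B : ∀ s ∈ Set.Icc a b, |μ' s| ≤ M := by
    intro s hs
    rw [hμ'eq s hs]
    have h := aux_cs (hL2' s hs) (memLp_const (1:ℝ)) (μ := P)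
    simp only [mul_one, one_pow, integral_const, probReal_univ, measure_univ, ENNReal.toReal_one, one_smul,
      Real.sqrt_one] at h
    exact le_trans h (hMb s hs)
  -- L² bound on the centered X1
  have hA2 : ∀ s ∈ Set.Icc a b, Real.sqrt (∫ ω, (X1 s ω - μ' s) ^ 2 ∂P) ≤ M + M := by
    intro s hs
    have h := aux_sqrt_tri (hL2' s hs) (memLp_const (-μ' s)) (μ := P)
    calc Real.sqrt (∫ ω, (X1 s ω - μ' s) ^ 2 ∂P)
        = Real.sqrt (∫ ω, (X1 s ω + (-μ' s)) ^ 2 ∂P) := by congr 1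
      _ ≤ Real.sqrt (∫ ω, X1 s ω ^ 2 ∂P) + Real.sqrt (∫ _ω, (-μ' s) ^ 2 ∂P) := h
      _ ≤ M + M := by
          refine add_le_add (hMb s hs) ?_
          rw [integral_const]
          simp only [probReal_univ, measure_univ, ENNReal.toReal_one, one_smul]
          rw [show (-μ' s) ^ 2 = (μ' s) ^ 2 by ring, Real.sqrt_sq_eq_abs]
          exact hμ'B s hs
  -- measurability of the mean of X1
  have hψm : StronglyMeasurable (fun s => ∫ ω, X1 s ω ∂P) :=
    hjm.stronglyMeasurable.integral_prod_right'
  have hμ'ae : μ' =ᵐ[volume.restrict (Set.Icc a b)] (fun s => ∫ ω, X1 s ω ∂P) := by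
    filter_upwards [ae_restrict_mem measurableSet_Icc] with s hs
    exact hμ'eq s hs
  have hmeas : AEStronglyMeasurable
      (Function.uncurry fun s ω => (X1 s ω - μ' s) * φ s * (X t ω - μ t))
      ((volume.restrict (Set.Icc a b)).prod P) := by
    have h1 : AEStronglyMeasurable (fun p : ℝ × Ω => X1 p.1 p.2)
        ((volume.restrict (Set.Icc a b)).prod P) := hjm.aestronglyMeasurable
    have h2 : AEStronglyMeasurable (fun p : ℝ × Ω => μ' p.1)
        ((volume.restrict (Set.Icc a b)).prod P) := by
      have hcomp := (Measure.quasiMeasurePreserving_fst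
        (μ := volume.restrict (Set.Icc a b)) (ν := P)).ae_eq_comp hμ'ae
      exact ((hψm.comp_measurable measurable_fst).aestronglyMeasurable).congr hcomp.symm
    have h3 : AEStronglyMeasurable (fun p : ℝ × Ω => φ p.1)
        ((volume.restrict (Set.Icc a b)).prod P) :=
      hφ.1.comp_quasiMeasurePreserving Measure.quasiMeasurePreserving_fst
    have h4 : AEStronglyMeasurable (fun p : ℝ × Ω => X t p.2 - μ t)
        ((volume.restrict (Set.Icc a b)).prod P) :=
      hYm.1.comp_quasiMeasurePreserving Measure.quasiMeasurePreserving_snd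
    exact ((h1.sub h2).mul h3).mul h4
  have hIntuc : Integrable
      (Function.uncurry fun s ω => (X1 s ω - μ' s) * φ s * (X t ω - μ t))
      ((volume.restrict (Set.Icc a b)).prod P) := by
    rw [integrable_prod_iff hmeas]
    constructor
    · filter_upwards [ae_restrict_mem measurableSet_Icc] with s hs
      simp only [Function.uncurry_apply_pair]
      have h := (aux_integrable_mul ((hL2' s hs).sub (memLp_const (μ' s))) hYm).mul_const (φ s)
      exact h.congr (Filter.Eventually.of_forall fun ω => by
        simp only [Pi.sub_apply]
        ring)
    · have hmeas2 : AEStronglyMeasurable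
          (fun s => ∫ ω, ‖(X1 s ω - μ' s) * φ s * (X t ω - μ t)‖ ∂P)
          (volume.restrict (Set.Icc a b)) := by
        have h := hmeas.norm.integral_prod_right'
        simpa [Function.uncurry] using h
      refine Integrable.mono'
        (((hφ.integrable one_le_two).abs).mul_const
          ((M + M) * Real.sqrt (∫ ω, (X t ω - μ t) ^ 2 ∂P))) hmeas2 ?_
      filter_upwards [ae_restrict_mem measurableSet_Icc] with s hs
      simp only [Function.uncurry_apply_pair]
      have hnn : 0 ≤ ∫ ω, ‖(X1 s ω - μ' s) * φ s * (X t ω - μ t)‖ ∂P :=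
        integral_nonneg fun ω => norm_nonneg _
      rw [Real.norm_of_nonneg hnn]
      have e1 : ∀ ω, ‖(X1 s ω - μ' s) * φ s * (X t ω - μ t)‖
          = |(X1 s ω - μ' s) * (X t ω - μ t)| * |φ s| := by
        intro ω
        rw [Real.norm_eq_abs, show (X1 s ω - μ' s) * φ s * (X t ω - μ t)
          = ((X1 s ω - μ' s) * (X t ω - μ t)) * φ s by ring, abs_mul]
      calc ∫ ω, ‖(X1 s ω - μ' s) * φ s * (X t ω - μ t)‖ ∂P
          = (∫ ω, |(X1 s ω - μ' s) * (X t ω - μ t)| ∂P) * |φ s| := by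
            rw [← integral_mul_const]
            exact integral_congr_ae (Filter.Eventually.of_forall fun ω => e1 ω)
        _ ≤ (Real.sqrt (∫ ω, (X1 s ω - μ' s) ^ 2 ∂P)
              * Real.sqrt (∫ ω, (X t ω - μ t) ^ 2 ∂P)) * |φ s| := by
            refine mul_le_mul_of_nonneg_right ?_ (abs_nonneg _)
            exact aux_cs_abs ((hL2' s hs).sub (memLp_const _)) hYm
        _ ≤ ((M + M) * Real.sqrt (∫ ω, (X t ω - μ t) ^ 2 ∂P)) * |φ s| := by
            refine mul_le_mul_of_nonneg_right
              (mul_le_mul_of_nonneg_right (hA2 s hs) (Real.sqrt_nonneg _)) (abs_nonneg _)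
        _ = |φ s| * ((M + M) * Real.sqrt (∫ ω, (X t ω - μ t) ^ 2 ∂P)) := by ring
  have hswap := integral_integral_swap
    (μ := volume.restrict (Set.Icc a b)) (ν := P) hIntuc
  calc ∫ ω, ξ ω * (X t ω - μ t) ∂P
      = ∫ ω, (∫ s in Set.Icc a b, (X1 s ω - μ' s) * φ s * (X t ω - μ t)) ∂P := by
        refine integral_congr_ae (Filter.Eventually.of_forall fun ω => ?_)
        show ξ ω * (X t ω - μ t)
          = ∫ s in Set.Icc a b, (X1 s ω - μ' s) * φ s * (X t ω - μ t)
        rw [hξ ω, ← integral_mul_const]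
    _ = ∫ s in Set.Icc a b, (∫ ω, (X1 s ω - μ' s) * φ s * (X t ω - μ t) ∂P) := hswap.symm
    _ = ∫ s in Set.Icc a b, G10 s t * φ s := by
        refine integral_congr_ae ?_
        filter_upwards [ae_restrict_mem measurableSet_Icc] with s hs
        have hI1 : Integrable (fun ω => X1 s ω * (X t ω - μ t)) P :=
          aux_integrable_mul (hL2' s hs) hYm
        have hI2 : Integrable (fun ω => μ' s * (X t ω - μ t)) P :=
          (hYm.integrable one_le_two).const_mul _
        calc ∫ ω, (X1 s ω - μ' s) * φ s * (X t ω - μ t) ∂P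
            = ∫ ω, (X1 s ω * (X t ω - μ t) - μ' s * (X t ω - μ t)) * φ s ∂P :=
              integral_congr_ae (Filter.Eventually.of_forall fun ω => by ring)
          _ = (∫ ω, (X1 s ω * (X t ω - μ t) - μ' s * (X t ω - μ t)) ∂P) * φ s :=
              integral_mul_const _ _
          _ = (∫ ω, X1 s ω * (X t ω - μ t) ∂P - μ' s * ∫ ω, (X t ω - μ t) ∂P) * φ s := by
              rw [integral_sub hI1 hI2, integral_const_mul]
          _ = G10 s t * φ s := by
              rw [hEY, mul_zero, sub_zero, ← hG10eq s hs]
end
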